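/- arXiv:2405.15116 — 2 statements merged into one kernel-verified Lean document; each statement's English description precedes it below -/
import Mathlib

section
/- In a real inner product space, let $K$ be convex, let $g^\star \in H$ be a target with $\inf_{x \in K} \|x - g^\star\|$ attained at $s \in K$ with $\|s - g^\star\|^2 = \varepsilon$, let $w \in H$, and let $p \in K$ minimize distance to $w$ over $K$. Then $\|p - g^\star\|^2 \le \|w - g^\star\|^2 - \|p - w\|^2 + 2\varepsilon + 2\sqrt{\varepsilon}\,\|w - g^\star\| + 2\sqrt{\varepsilon}\,\|p - s\|$. -/
open RealInnerProductSpace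


theorem stmt_8 {H : Type*} [NormedAddCommGroup H] [InnerProductSpace ℝ H]
    (K : Set H) (hK : Convex ℝ K)
    (gstar : H) (s : H) (hs : s ∈ K)
    (hsmin : ∀ x ∈ K, ‖s - gstar‖ ≤ ‖x - gstar‖)
    (ε : ℝ) (hε : ‖s - gstar‖ ^ 2 = ε)
    (w : H) (p : H) (hp : p ∈ K)
    (hmin : ∀ x ∈ K, ‖p - w‖ ≤ ‖x - w‖) :
    ‖p - gstar‖ ^ 2 ≤ ‖w - gstar‖ ^ 2 - ‖p - w‖ ^ 2 + 2 * ε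
      + 2 * Real.sqrt ε * ‖w - gstar‖ + 2 * Real.sqrt ε * ‖p - s‖ := by
  have hsqrt : Real.sqrt ε = ‖s - gstar‖ := by
    rw [← hε]; exact Real.sqrt_sq (norm_nonneg _)
  letI : Nonempty K := ⟨⟨p, hp⟩⟩
  have heq : ‖w - p‖ = ⨅ x : K, ‖w - x‖ := by
    apply le_antisymm
    · apply le_ciInf
      intro x
      rw [norm_sub_rev w p, norm_sub_rev w x]
      exact hmin x x.2
    · have hbdd : BddBelow (Set.range fun x : K => ‖w - x‖) := by
        refine ⟨0, ?_⟩
        rintro _ ⟨x, rfl⟩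
        exact norm_nonneg _
      exact ciInf_le hbdd ⟨p, hp⟩
  have hinner : (inner ℝ (w - p) (s - p) : ℝ) ≤ 0 :=
    (norm_eq_iInf_iff_real_inner_le_zero hK hp).mp heq s hs
  have hpyth : ‖p - s‖ ^ 2 + ‖p - w‖ ^ 2 ≤ ‖w - s‖ ^ 2 := by
    have expand : ‖w - s‖ ^ 2 = ‖w - p‖ ^ 2 + 2 * (inner ℝ (w - p) (p - s) : ℝ) + ‖p - s‖ ^ 2 := by
      have : w - s = (w - p) + (p - s) := by abel
      rw [this, ← real_inner_self_eq_norm_sq, ← real_inner_self_eq_norm_sq,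
        ← real_inner_self_eq_norm_sq, inner_add_add_self, real_inner_comm (p - s) (w - p)]
      ring
    have : (inner ℝ (w - p) (p - s) : ℝ) = - (inner ℝ (w - p) (s - p) : ℝ) := by
      rw [← inner_neg_right]; congr 1; abel
    rw [norm_sub_rev p w]
    nlinarith
  have htr1 : ‖p - gstar‖ ≤ ‖p - s‖ + ‖s - gstar‖ := norm_sub_le_norm_sub_add_norm_sub p s gstar
  have htr2 : ‖w - s‖ ≤ ‖w - gstar‖ + ‖s - gstar‖ := by
    rw [norm_sub_rev s gstar] at *
    exact norm_sub_le_norm_sub_add_norm_sub w gstar s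
  rw [hsqrt]
  nlinarith [norm_nonneg (p - gstar), norm_nonneg (p - s), norm_nonneg (s - gstar),
    norm_nonneg (w - s), norm_nonneg (w - gstar), sq_nonneg (‖p-gstar‖)]
end

section
/- In a real inner product space with convex $K$, target $g^\star \in K$, weak model $w$, and projection $p$ of $w$ onto $K$: if the misfit satisfies $\|p - w\|^2 \ge (1 - \alpha)\,\|w - g^\star\|^2$ for some $\alpha \in [0,1]$, then $\|p - g^\star\|^2 \le \alpha\,\|w - g^\star\|^2$. -/
open scoped RealInnerProductSpace

theorem stmt_16 {H : Type*} [NormedAddCommGroup H] [InnerProductSpace ℝ H]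
    (K : Set H) (hK : Convex ℝ K)
    (gstar : H) (hg : gstar ∈ K)
    (w : H) (p : H) (hp : p ∈ K)
    (hmin : ∀ x ∈ K, ‖p - w‖ ≤ ‖x - w‖)
    (α : ℝ) (hα0 : 0 ≤ α) (hα1 : α ≤ 1)
    (hmisfit : (1 - α) * ‖w - gstar‖ ^ 2 ≤ ‖p - w‖ ^ 2) :
    ‖p - gstar‖ ^ 2 ≤ α * ‖w - gstar‖ ^ 2 := by
  letI : Nonempty K := ⟨⟨p, hp⟩⟩
  have hinf : ‖w - p‖ = ⨅ x : K, ‖w - x‖ := by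
    apply le_antisymm
    · refine le_ciInf fun x => ?_
      rw [norm_sub_rev, norm_sub_rev w x]
      exact hmin x x.2
    · exact ciInf_le ⟨0, fun _ ⟨_, h⟩ => h ▸ norm_nonneg _⟩ (⟨p, hp⟩ : K)
  have hang : (inner ℝ (w - p) (gstar - p) : ℝ) ≤ 0 :=
    (norm_eq_iInf_iff_real_inner_le_zero hK hp).mp hinf gstar hg
  have key : ‖w - gstar‖ ^ 2 = ‖w - p‖ ^ 2 + ‖p - gstar‖ ^ 2 - 2 * (inner ℝ (w - p) (gstar - p) : ℝ) := by
    have h1 : (w - gstar) = (w - p) - (gstar - p) := by abel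
    rw [h1, norm_sub_sq_real, norm_sub_rev gstar p]
    ring
  have hrev : ‖p - w‖ = ‖w - p‖ := norm_sub_rev _ _
  rw [hrev] at hmisfit
  linarith
end
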